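/- With c_1,...,c_{2m} as above (not all equal), the WEAT effect size d equals 2 if and only if c_1 = c_2 = ... = c_m and c_{m+1} = ... = c_{2m} with c_1 > c_{m+1} — equivalently, all first-half values equal a common value a and all second-half values equal a common value b with a > b. -/

import Mathlib

private lemma sum_sq_shift (s : Finset ℕ) (f : ℕ → ℝ) (t : ℝ) :
    ∑ i ∈ s, (f i - t)^2
      = ∑ i ∈ s, (f i)^2 - 2*t*∑ i ∈ s, f i + s.card * t^2 := by
  have h : ∀ i ∈ s, (f i - t)^2 = (f i)^2 - 2*t*(f i) + t^2 := fun i _ => by ring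
  rw [Finset.sum_congr rfl h, Finset.sum_add_distrib, Finset.sum_sub_distrib,
    ← Finset.mul_sum, Finset.sum_const, nsmul_eq_mul]

/-- For real numbers `c 0, ..., c (2m-1)` that are not all equal (`σ > 0`), the WEAT
effect size equals `2` iff all first-half values equal a common value `a` and all
second-half values equal a common value `b` with `a > b`. -/
theorem weat_effect_size_eq_two_iff (m : ℕ) (hm : 1 ≤ m) (c : ℕ → ℝ) (μ σ d : ℝ)
    (hμ : μ = (∑ i ∈ Finset.range (2 * m), c i) / (2 * m))
    (hσdef : σ = Real.sqrt ((∑ i ∈ Finset.range (2 * m), (c i - μ) ^ 2) / (2 * m)))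
    (hσ : 0 < σ)
    (hd : d = ((1 / (m : ℝ)) * ∑ i ∈ Finset.range m, c i
        - (1 / (m : ℝ)) * ∑ i ∈ Finset.Ico m (2 * m), c i) / σ) :
    d = 2 ↔ ∃ a b : ℝ, a > b ∧ (∀ i < m, c i = a) ∧ (∀ i, m ≤ i → i < 2 * m → c i = b) := by
  have hmR : (0:ℝ) < (m:ℝ) := by exact_mod_cast hm
  have hm2 : (0:ℝ) < (2*m : ℕ) := by push_cast; linarith
  have hsplit : ∀ f : ℕ → ℝ, ∑ i ∈ Finset.range (2*m), f i
      = ∑ i ∈ Finset.range m, f i + ∑ i ∈ Finset.Ico m (2*m), f i := by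
    intro f
    rw [← Finset.sum_range_add_sum_Ico f (by omega : m ≤ 2*m)]
  -- σ squared
  have hvnonneg : (0:ℝ) ≤ (∑ i ∈ Finset.range (2 * m), (c i - μ) ^ 2) / (2 * m) := by
    apply div_nonneg
    · exact Finset.sum_nonneg fun i _ => sq_nonneg _
    · positivity
  have hσsq : σ^2 = (∑ i ∈ Finset.range (2 * m), (c i - μ) ^ 2) / (2 * m) := by
    rw [hσdef, Real.sq_sqrt hvnonneg]
  have hA : ∑ i ∈ Finset.range (2 * m), (c i - μ) ^ 2 = 2*m*σ^2 := by
    field_simp at hσsq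
    push_cast at hσsq ⊢
    linarith
  have hT : ∑ i ∈ Finset.range (2 * m), (c i - μ) = 0 := by
    rw [Finset.sum_sub_distrib, Finset.sum_const, Finset.card_range, nsmul_eq_mul, hμ]
    field_simp
    push_cast
    ring
  constructor
  · intro hd2
    -- from d = 2 : S1 - S2 = 2 m σ
    set S1 := ∑ i ∈ Finset.range m, c i with hS1
    set S2 := ∑ i ∈ Finset.Ico m (2*m), c i with hS2
    have hdiff : S1 - S2 = 2*(m:ℝ)*σ := by
      rw [hd2] at hd
      field_simp at hd
      linarith
    set T1 := ∑ i ∈ Finset.range m, (c i - μ) with hT1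
    set T2 := ∑ i ∈ Finset.Ico m (2*m), (c i - μ) with hT2
    have hT12 : T1 + T2 = 0 := by rw [hT1, hT2, ← hsplit]; exact hT
    have hTsub : T1 - T2 = 2*(m:ℝ)*σ := by
      have e1 : T1 = S1 - m*μ := by
        rw [hT1, Finset.sum_sub_distrib, Finset.sum_const, Finset.card_range, nsmul_eq_mul]
      have e2 : T2 = S2 - m*μ := by
        rw [hT2, Finset.sum_sub_distrib, Finset.sum_const, nsmul_eq_mul,
          Nat.card_Ico]
        congr 2
        push_cast
        ring_nf
        norm_cast
        omega
      rw [e1, e2]; linarith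
    have hT1v : T1 = (m:ℝ)*σ := by linarith
    have hT2v : T2 = -((m:ℝ)*σ) := by linarith
    -- key sum of squares is zero
    have key : ∑ i ∈ Finset.range m, (c i - (μ+σ))^2
        + ∑ i ∈ Finset.Ico m (2*m), (c i - (μ-σ))^2 = 0 := by
      have e1 : ∑ i ∈ Finset.range m, (c i - (μ+σ))^2
          = ∑ i ∈ Finset.range m, (c i - μ - σ)^2 := by
        apply Finset.sum_congr rfl; intro i _; ring
      have e2 : ∑ i ∈ Finset.Ico m (2*m), (c i - (μ-σ))^2
          = ∑ i ∈ Finset.Ico m (2*m), (c i - μ - (-σ))^2 := by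
        apply Finset.sum_congr rfl; intro i _; ring
      have f1 : ∑ i ∈ Finset.range m, (c i - μ - σ)^2
          = ∑ i ∈ Finset.range m, (c i - μ)^2 - 2*σ*T1
            + (Finset.range m).card * σ^2 :=
        sum_sq_shift (Finset.range m) (fun j => c j - μ) σ
      have f2 : ∑ i ∈ Finset.Ico m (2*m), (c i - μ - (-σ))^2
          = ∑ i ∈ Finset.Ico m (2*m), (c i - μ)^2 - 2*(-σ)*T2
            + (Finset.Ico m (2*m)).card * (-σ)^2 :=
        sum_sq_shift (Finset.Ico m (2*m)) (fun j => c j - μ) (-σ)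
      have hAB : ∑ i ∈ Finset.range m, (c i - μ)^2
          + ∑ i ∈ Finset.Ico m (2*m), (c i - μ)^2 = 2*(m:ℝ)*σ^2 := by
        rw [← hsplit]
        push_cast at hA ⊢
        linarith
      have hcard2 : (((Finset.Ico m (2*m)).card : ℕ) : ℝ) = (m:ℝ) := by
        rw [Nat.card_Ico]
        norm_cast
        omega
      rw [e1, e2, f1, f2, Finset.card_range, hcard2, hT1v, hT2v]
      linear_combination hAB
    -- deduce both sums zero
    have nn1 : (0:ℝ) ≤ ∑ i ∈ Finset.range m, (c i - (μ+σ))^2 :=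
      Finset.sum_nonneg fun i _ => sq_nonneg _
    have nn2 : (0:ℝ) ≤ ∑ i ∈ Finset.Ico m (2*m), (c i - (μ-σ))^2 :=
      Finset.sum_nonneg fun i _ => sq_nonneg _
    have z1 : ∑ i ∈ Finset.range m, (c i - (μ+σ))^2 = 0 := by linarith
    have z2 : ∑ i ∈ Finset.Ico m (2*m), (c i - (μ-σ))^2 = 0 := by linarith
    refine ⟨μ+σ, μ-σ, by linarith, ?_, ?_⟩
    · intro i hi
      have := (Finset.sum_eq_zero_iff_of_nonneg (fun j _ => sq_nonneg _)).mp z1 i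
        (Finset.mem_range.mpr hi)
      have := pow_eq_zero_iff (n := 2) (by norm_num) |>.mp this
      linarith
    · intro i hi1 hi2
      have := (Finset.sum_eq_zero_iff_of_nonneg (fun j _ => sq_nonneg _)).mp z2 i
        (Finset.mem_Ico.mpr ⟨hi1, hi2⟩)
      have := pow_eq_zero_iff (n := 2) (by norm_num) |>.mp this
      linarith
  · rintro ⟨a, b, hab, h1, h2⟩
    have hS1 : ∑ i ∈ Finset.range m, c i = m * a := by
      rw [Finset.sum_congr rfl (fun i hi => h1 i (Finset.mem_range.mp hi)),
        Finset.sum_const, Finset.card_range, nsmul_eq_mul]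
    have hS2 : ∑ i ∈ Finset.Ico m (2*m), c i = m * b := by
      rw [Finset.sum_congr rfl (fun i hi => by
          obtain ⟨h₁, h₂⟩ := Finset.mem_Ico.mp hi
          exact h2 i h₁ h₂),
        Finset.sum_const, Nat.card_Ico, nsmul_eq_mul]
      congr 1
      push_cast
      norm_cast
      omega
    have hμv : μ = (a+b)/2 := by
      rw [hμ, hsplit, hS1, hS2]
      push_cast
      field_simp
    have hsum2 : ∑ i ∈ Finset.range (2 * m), (c i - μ) ^ 2 = 2*m*((a-b)/2)^2 := by
      rw [hsplit]
      have e1 : ∑ i ∈ Finset.range m, (c i - μ)^2 = m * ((a-b)/2)^2 := by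
        have hval : ∀ i ∈ Finset.range m, (c i - μ)^2 = ((a-b)/2)^2 := by
          intro i hi
          rw [h1 i (Finset.mem_range.mp hi), hμv]; ring
        rw [Finset.sum_congr rfl hval, Finset.sum_const, Finset.card_range, nsmul_eq_mul]
      have e2 : ∑ i ∈ Finset.Ico m (2*m), (c i - μ)^2 = m * ((a-b)/2)^2 := by
        have hval : ∀ i ∈ Finset.Ico m (2*m), (c i - μ)^2 = ((a-b)/2)^2 := by
          intro i hi
          obtain ⟨h₁, h₂⟩ := Finset.mem_Ico.mp hi
          rw [h2 i h₁ h₂, hμv]; ring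
        rw [Finset.sum_congr rfl hval, Finset.sum_const, Nat.card_Ico, nsmul_eq_mul]
        have : ((2*m - m : ℕ) : ℝ) = (m:ℝ) := by norm_cast; omega
        rw [this]
      rw [e1, e2]; ring
    have hσv : σ = (a-b)/2 := by
      rw [hσdef, hsum2]
      have harg : 2*(m:ℝ)*((a-b)/2)^2 / (2*m) = ((a-b)/2)^2 := by
        field_simp
      push_cast at harg ⊢
      rw [harg, Real.sqrt_sq (by linarith)]
    have hne : a - b ≠ 0 := by linarith
    rw [hd, hS1, hS2, hσv]
    field_simp
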